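/- Suppose f has L_f-Lipschitz gradient and is bounded below with infimum f̲. If x* is a first-order stationary point of F(x)=f(x)+λ‖x‖_p^p (i.e. x*_i ∂f/∂x_i(x*)+λp|x*_i|^p=0 for all i) and F(x*) ≤ F(x⁰)+ε for some x⁰∈ℝⁿ and ε≥0, then every nonzero entry satisfies |x*_i| ≥ (λp/√(2L_f[F(x⁰)+ε−f̲]))^{1/(1−p)}. -/

import Mathlib

open InnerProductSpace

lemma inner_grad {E : Type*} [NormedAddCommGroup E] [InnerProductSpace ℝ E]
    [CompleteSpace E] (f : E → ℝ) (y v : E) :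
    (inner ℝ (gradient f y) v : ℝ) = fderiv ℝ f y v :=
  InnerProductSpace.toDual_symm_apply

lemma descent {E : Type*} [NormedAddCommGroup E] [InnerProductSpace ℝ E]
    [CompleteSpace E] (f : E → ℝ) (hf : Differentiable ℝ f) (L : ℝ)
    (hlip : ∀ a b : E, ‖gradient f a - gradient f b‖ ≤ L * ‖a - b‖) (x v : E) :
    f (x + v) ≤ f x + inner ℝ (gradient f x) v + L / 2 * ‖v‖ ^ 2 := by
  set φ : ℝ → ℝ := fun t => f (x + t • v) - t * inner ℝ (gradient f x) v - L / 2 * t ^ 2 * ‖v‖ ^ 2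
    with hφ
  have hline : ∀ t : ℝ, HasDerivAt (fun s : ℝ => x + s • v) v t := fun t => by
    simpa using ((hasDerivAt_id t).smul_const v).const_add x
  have hder : ∀ t : ℝ, HasDerivAt φ
      (fderiv ℝ f (x + t • v) v - inner ℝ (gradient f x) v - L / 2 * (2 * t) * ‖v‖ ^ 2) t := by
    intro t
    have h1 : HasDerivAt (fun s : ℝ => f (x + s • v)) (fderiv ℝ f (x + t • v) v) t :=
      (hf (x + t • v)).hasFDerivAt.comp_hasDerivAt t (hline t)
    have h2 : HasDerivAt (fun s : ℝ => s * (inner ℝ (gradient f x) v : ℝ))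
        (inner ℝ (gradient f x) v : ℝ) t := by
      simpa using (hasDerivAt_id t).mul_const (inner ℝ (gradient f x) v : ℝ)
    have h3 : HasDerivAt (fun s : ℝ => L / 2 * s ^ 2 * ‖v‖ ^ 2)
        (L / 2 * (2 * t) * ‖v‖ ^ 2) t := by
      have := ((hasDerivAt_pow 2 t).const_mul (L / 2)).mul_const (‖v‖ ^ 2)
      simpa [mul_comm, mul_assoc, mul_left_comm] using this
    exact (h1.sub h2).sub h3
  have hmono : AntitoneOn φ (Set.Icc 0 1) := by
    apply antitoneOn_of_deriv_nonpos (convex_Icc 0 1)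
    · exact Continuous.continuousOn (by
        simp only [hφ]; have := hf.continuous; fun_prop)
    · intro t ht
      exact ((hder t).differentiableAt).differentiableWithinAt
    · intro t ht
      rw [interior_Icc] at ht
      rw [(hder t).deriv]
      have key : fderiv ℝ f (x + t • v) v - fderiv ℝ f x v ≤ L * t * ‖v‖ ^ 2 := by
        rw [← inner_grad f (x + t • v) v, ← inner_grad f x v, ← inner_sub_left]
        calc (inner ℝ (gradient f (x + t • v) - gradient f x) v : ℝ)
            ≤ ‖gradient f (x + t • v) - gradient f x‖ * ‖v‖ := real_inner_le_norm _ _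
          _ ≤ L * ‖(x + t • v) - x‖ * ‖v‖ := by
              exact mul_le_mul_of_nonneg_right (hlip _ _) (norm_nonneg v)
          _ = L * t * ‖v‖ ^ 2 := by
              rw [show x + t • v - x = t • v by abel, norm_smul]
              simp [abs_of_pos ht.1]
              ring
      have : fderiv ℝ f x v = (inner ℝ (gradient f x) v : ℝ) := (inner_grad f x v).symm
      nlinarith [key]
  have h01 := hmono (by simp : (0:ℝ) ∈ Set.Icc (0:ℝ) 1) (by simp : (1:ℝ) ∈ Set.Icc (0:ℝ) 1)
    zero_le_one
  simp only [hφ] at h01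
  simp at h01
  linarith [h01, inner_grad f x v]

lemma grad_norm_sq_le {E : Type*} [NormedAddCommGroup E] [InnerProductSpace ℝ E]
    [CompleteSpace E] (f : E → ℝ) (hf : Differentiable ℝ f) (L fbar : ℝ) (hL : 0 < L)
    (hlip : ∀ a b : E, ‖gradient f a - gradient f b‖ ≤ L * ‖a - b‖)
    (hinf : ∀ y, fbar ≤ f y) (x : E) :
    ‖gradient f x‖ ^ 2 ≤ 2 * L * (f x - fbar) := by
  have h := descent f hf L hlip x ((-(1 / L)) • gradient f x)
  have h1 : (inner ℝ (gradient f x) ((-(1 / L)) • gradient f x) : ℝ)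
      = -(1 / L) * ‖gradient f x‖ ^ 2 := by
    rw [real_inner_smul_right, real_inner_self_eq_norm_sq]
  have h2 : ‖(-(1 / L)) • gradient f x‖ ^ 2 = (1 / L) ^ 2 * ‖gradient f x‖ ^ 2 := by
    rw [norm_smul, Real.norm_eq_abs, abs_neg, abs_div, abs_one, abs_of_pos hL]
    ring
  rw [h1, h2] at h
  have h3 := hinf (x + (-(1 / L)) • gradient f x)
  have hL' : L ≠ 0 := ne_of_gt hL
  have heq : -(1 / L) * ‖gradient f x‖ ^ 2 + L / 2 * ((1 / L) ^ 2 * ‖gradient f x‖ ^ 2)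
      = -(1 / (2 * L) * ‖gradient f x‖ ^ 2) := by
    field_simp
    ring
  have h5 : 1 / (2 * L) * ‖gradient f x‖ ^ 2 ≤ f x - fbar := by linarith
  calc ‖gradient f x‖ ^ 2 = 2 * L * (1 / (2 * L) * ‖gradient f x‖ ^ 2) := by field_simp
    _ ≤ 2 * L * (f x - fbar) := mul_le_mul_of_nonneg_left h5 (by positivity)

/-- Lower bound on nonzero entries of first-order stationary points x* of
F(x) = f(x) + λ‖x‖_p^p with F(x*) ≤ F(x⁰) + ε, when ∇f is L_f-Lipschitz and
f is bounded below with infimum fbar. -/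
theorem stmt_11 (n : ℕ) (p lam Lf eps fbar : ℝ) (hp : 0 < p) (hp1 : p < 1)
    (hlam : 0 < lam) (hLf : 0 < Lf) (heps : 0 ≤ eps)
    (f : EuclideanSpace ℝ (Fin n) → ℝ) (hf : Differentiable ℝ f)
    (hlip : ∀ a b : EuclideanSpace ℝ (Fin n), ‖gradient f a - gradient f b‖ ≤ Lf * ‖a - b‖)
    (hinf : IsGLB (Set.range f) fbar)
    (x x0 : EuclideanSpace ℝ (Fin n))
    (hstat : ∀ i, x i * fderiv ℝ f x (EuclideanSpace.single i 1) + lam * p * |x i| ^ p = 0)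
    (hF : f x + lam * ∑ i, |x i| ^ p ≤ f x0 + lam * (∑ i, |x0 i| ^ p) + eps) :
    ∀ i, x i ≠ 0 →
      (lam * p / Real.sqrt (2 * Lf * (f x0 + lam * (∑ i, |x0 i| ^ p) + eps - fbar)))
          ^ ((1 : ℝ) / (1 - p)) ≤ |x i| := by
  intro i hxi
  set C : ℝ := f x0 + lam * (∑ i, |x0 i| ^ p) + eps with hC
  have hlb : ∀ y, fbar ≤ f y := fun y => hinf.1 ⟨y, rfl⟩
  -- sum nonneg
  have hsum : (0:ℝ) ≤ ∑ j, |x j| ^ p :=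
    Finset.sum_nonneg fun j _ => Real.rpow_nonneg (abs_nonneg _) p
  have hfxC : f x ≤ C := by nlinarith [mul_nonneg hlam.le hsum]
  have hCfbar : 0 ≤ C - fbar := by linarith [hlb x]
  -- gradient bound
  have hg2 : ‖gradient f x‖ ^ 2 ≤ 2 * Lf * (C - fbar) := by
    calc ‖gradient f x‖ ^ 2 ≤ 2 * Lf * (f x - fbar) :=
          grad_norm_sq_le f hf Lf fbar hLf hlip hlb x
      _ ≤ 2 * Lf * (C - fbar) := by nlinarith
  set S : ℝ := Real.sqrt (2 * Lf * (C - fbar)) with hS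
  have hgS : ‖gradient f x‖ ≤ S := by
    rw [hS]
    exact (Real.le_sqrt (norm_nonneg _) (by nlinarith)).mpr hg2
  -- partial derivative bound
  have hDi : |fderiv ℝ f x (EuclideanSpace.single i 1)| ≤ S := by
    rw [← inner_grad f x (EuclideanSpace.single i 1)]
    calc |(inner ℝ (gradient f x) (EuclideanSpace.single i 1) : ℝ)|
        ≤ ‖gradient f x‖ * ‖EuclideanSpace.single i (1:ℝ)‖ := abs_real_inner_le_norm _ _
      _ = ‖gradient f x‖ := by simp [EuclideanSpace.norm_single]
      _ ≤ S := hgS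
  set t : ℝ := |x i| with ht
  have htpos : 0 < t := abs_pos.mpr hxi
  -- stationarity: |D_i| = lam * p * t^(p-1)
  have hstat' := hstat i
  have habs : t * |fderiv ℝ f x (EuclideanSpace.single i 1)| = lam * p * t ^ p := by
    have : x i * fderiv ℝ f x (EuclideanSpace.single i 1) = -(lam * p * t ^ p) := by
      linarith
    have h2 := congrArg abs this
    rw [abs_mul, abs_neg, abs_of_nonneg (by positivity : (0:ℝ) ≤ lam * p * t ^ p)] at h2
    exact h2
  have hkey : lam * p * t ^ (p - 1) ≤ S := by
    have h2 : |fderiv ℝ f x (EuclideanSpace.single i 1)| = lam * p * t ^ p / t := by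
      rw [← habs]
      field_simp
    have h3 : lam * p * t ^ (p - 1) = lam * p * t ^ p / t := by
      rw [Real.rpow_sub htpos, Real.rpow_one]
      ring
    rw [h3, ← h2]
    exact hDi
  -- hence lam*p/S ≤ t^(1-p)
  have hSpos : 0 < S := lt_of_lt_of_le (by positivity) hkey
  have hfrac : lam * p / S ≤ t ^ (1 - p) := by
    rw [div_le_iff₀ hSpos]
    have h1 : t ^ (p - 1) * t ^ (1 - p) = 1 := by
      rw [← Real.rpow_add htpos]; norm_num
    calc lam * p = lam * p * (t ^ (p - 1) * t ^ (1 - p)) := by rw [h1]; ring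
      _ = (lam * p * t ^ (p - 1)) * t ^ (1 - p) := by ring
      _ ≤ S * t ^ (1 - p) := by
          apply mul_le_mul_of_nonneg_right hkey (Real.rpow_nonneg htpos.le _)
      _ = t ^ (1 - p) * S := by ring
  have hexp : (0:ℝ) < 1 - p := by linarith
  calc (lam * p / S) ^ ((1:ℝ) / (1 - p))
      ≤ (t ^ (1 - p)) ^ ((1:ℝ) / (1 - p)) :=
        Real.rpow_le_rpow (by positivity) hfrac (by positivity)
    _ = t := by
        rw [← Real.rpow_mul htpos.le, mul_one_div, div_self (ne_of_gt hexp), Real.rpow_one]
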